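/- Let G be a finite simple graph with n ≥ 1 vertices and let H = G × K₃, a graph on 3n vertices. Then for every partition I = (I₁, …, I_k) of the vertex set of H, writing a_j = #I_j, one has Béz(A(H); I₁, …, I_k) ≥ B(a₁, …, a_k). -/

import Mathlib

open Finset

open Classical in
/-- The support `A(H)` of a graph `H`: the exponent vectors `e_{v₁} + ⋯ + e_{v_s}`
(indicator vectors) of the cliques `{v₁, …, v_s}` of `H` of size `s ≤ 3`. -/
noncomputable def graphSupport {V : Type*} [Fintype V] (H : SimpleGraph V) :
    Finset (V → ℕ) :=
  ((Finset.univ : Finset (Finset V)).filter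
      (fun T : Finset V => T.card ≤ 3 ∧ H.IsClique (T : Set V))).image
    (fun T v => if v ∈ T then 1 else 0)

/-- The multi-homogeneous Bézout number of a support `A` with respect to the family
of groups of variables `I₁, …, I_k`, namely `(m!/(a₁!⋯a_k!)) · ∏_j d_j ^ a_j` where
`a_j = #I_j` and `d_j = max_{α ∈ A} ∑_{l ∈ I_j} α_l`. -/
noncomputable def bez {V : Type*} [Fintype V] (A : Finset (V → ℕ))
    {k : ℕ} (I : Fin k → Finset V) : ℕ :=
  Nat.multinomial Finset.univ (fun j => (I j).card) *
    ∏ j, (A.sup fun α => ∑ l ∈ I j, α l) ^ (I j).card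

/-- `I₁, …, I_k` is a partition of the (finite) type `V`: the classes are pairwise
disjoint and they cover `V`. -/
def IsPartitionFam {V : Type*} {k : ℕ} (I : Fin k → Finset V) : Prop :=
  (∀ i j, i ≠ j → Disjoint (I i) (I j)) ∧ ∀ v, ∃ j, v ∈ I j

/-- The family of classes `I₁, …, I_k` is a proper coloring of `H`: no class contains
two adjacent vertices. -/
def ProperFam {V : Type*} (H : SimpleGraph V) {k : ℕ} (I : Fin k → Finset V) : Prop :=
  ∀ j, ∀ u ∈ I j, ∀ v ∈ I j, ¬ H.Adj u v

/-- The minimal multi-homogeneous Bézout number of a support `A`, over all partitions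
of the set of variables. -/
noncomputable def minBez {V : Type*} [Fintype V] (A : Finset (V → ℕ)) : ℕ :=
  sInf {b : ℕ | ∃ (k : ℕ) (I : Fin k → Finset V), IsPartitionFam I ∧ bez A I = b}

open Classical in
/-- The `l`-fold cartesian product `A^l` of a support `A ⊆ ℕ^V`: the concatenations
`(α⁽¹⁾, …, α⁽ˡ⁾)` of members of `A`, indexed by `Fin l × V`. -/
noncomputable def powSupport {V : Type*} [Fintype V] (A : Finset (V → ℕ)) (l : ℕ) :
    Finset (Fin l × V → ℕ) :=
  (Fintype.piFinset (fun _ : Fin l => A)).image (fun f p => f p.1 p.2)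

/-- For `H = G □ K₃` with `|G| = n ≥ 1` and any partition
`I = (I₁, …, I_k)` of the vertices of `H`, writing `a_j = #I_j`, one has
`Béz(A(H); I) ≥ B(a) = ((3n)!/(a₁!⋯a_k!)) · ∏_j ⌈a_j/n⌉ ^ a_j`. -/
theorem stmt_3 {V : Type*} [Fintype V] (G : SimpleGraph V) (n : ℕ)
    (hn : Fintype.card V = n) (hn1 : 1 ≤ n)
    (k : ℕ) (I : Fin k → Finset (V × Fin 3)) (hI : IsPartitionFam I) :
    Nat.multinomial Finset.univ (fun j => (I j).card) *
        ∏ j, ((I j).card ⌈/⌉ n) ^ (I j).card ≤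
      bez (graphSupport (G.boxProd (SimpleGraph.completeGraph (Fin 3)))) I := by
  classical
  unfold bez
  apply Nat.mul_le_mul_left
  apply Finset.prod_le_prod'
  intro j _
  apply Nat.pow_le_pow_left
  set S := I j with hS
  set a := S.card with ha
  set c := a ⌈/⌉ n with hc
  rcases Nat.eq_zero_or_pos a with h0 | hpos
  · have hc0 : c ≤ 0 := by
      rw [hc, ceilDiv_le_iff_le_mul (show (0:ℕ) < n from hn1)]; omega
    exact le_trans hc0 (Nat.zero_le _)
  -- pigeonhole: some fiber of S over V has ≥ c elements
  have hnpos : (0:ℕ) < n := hn1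
  have hsum : ∑ v : V, (S.filter (fun p => p.1 = v)).card = a := by
    rw [ha]
    exact (Finset.card_eq_sum_card_fiberwise (fun p _ => Finset.mem_univ p.1)).symm
  have hex : ∃ v : V, c ≤ (S.filter (fun p => p.1 = v)).card := by
    by_contra h
    push_neg at h
    have hle : a ≤ n * (c - 1) := by
      calc a = ∑ v : V, (S.filter (fun p => p.1 = v)).card := hsum.symm
        _ ≤ ∑ _v : V, (c - 1) := Finset.sum_le_sum (fun v _ => by
            have := h v; omega)
        _ = n * (c - 1) := by simp [hn, mul_comm]
    have hc1 : 1 ≤ c := by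
      by_contra hc0
      have : c ≤ 0 := by omega
      rw [hc, ceilDiv_le_iff_le_mul hnpos] at this
      omega
    have : c ≤ c - 1 := by
      rw [hc, ceilDiv_le_iff_le_mul hnpos]; exact hle
    omega
  obtain ⟨v, hv⟩ := hex
  obtain ⟨T, hTsub, hTcard⟩ := Finset.exists_subset_card_eq hv
  have hTS : T ⊆ S := hTsub.trans (Finset.filter_subset _ _)
  have hc3 : c ≤ 3 := by
    rw [hc, ceilDiv_le_iff_le_mul hnpos]
    calc a ≤ Fintype.card (V × Fin 3) := Finset.card_le_univ S
      _ = n * 3 := by simp [hn, mul_comm]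
  have hclique : (G.boxProd (SimpleGraph.completeGraph (Fin 3))).IsClique (T : Set (V × Fin 3)) := by
    intro p hp q hq hpq
    have hp1 : p.1 = v := (Finset.mem_filter.1 (hTsub hp)).2
    have hq1 : q.1 = v := (Finset.mem_filter.1 (hTsub hq)).2
    rw [SimpleGraph.boxProd_adj]
    right
    refine ⟨?_, hp1.trans hq1.symm⟩
    simp only [SimpleGraph.completeGraph, SimpleGraph.top_adj]
    intro h2
    exact hpq (Prod.ext (hp1.trans hq1.symm) h2)
  have hmem : (fun p => if p ∈ T then 1 else 0) ∈
      graphSupport (G.boxProd (SimpleGraph.completeGraph (Fin 3))) := by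
    simp only [graphSupport, Finset.mem_image, Finset.mem_filter, Finset.mem_univ, true_and]
    exact ⟨T, ⟨by rw [hTcard]; exact hc3, hclique⟩, by funext p; by_cases h : p ∈ T <;> simp [h]⟩
  calc c = T.card := hTcard.symm
    _ = ∑ l ∈ S, (if l ∈ T then 1 else 0) := by
        rw [Finset.sum_ite_mem, Finset.inter_eq_right.2 hTS, Finset.card_eq_sum_ones]
    _ ≤ _ := Finset.le_sup (f := fun α => ∑ l ∈ S, α l) hmem
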